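/- arXiv:1312.3043 — 7 statements merged into one kernel-verified Lean document; each statement's English description precedes it below -/
import Mathlib

section
/- Equality case of the log-sum inequality: for positive reals a_1,...,a_n and b_1,...,b_n, equality ∑_i a_i * log(a_i / b_i) = (∑_i a_i) * log((∑_i a_i) / (∑_i b_i)) holds if and only if the ratio a_i / b_i is constant in i. -/
theorem stmt_2 (n : ℕ) (hn : 1 ≤ n) (a b : Fin n → ℝ)
    (ha : ∀ i, 0 < a i) (hb : ∀ i, 0 < b i) :
    (∑ i, a i * Real.log (a i / b i)) =
      (∑ i, a i) * Real.log ((∑ i, a i) / (∑ i, b i)) ↔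
    ∃ c : ℝ, ∀ i, a i / b i = c := by
  have hne : Nonempty (Fin n) := ⟨⟨0, hn⟩⟩
  have hA : 0 < ∑ i, a i := Finset.sum_pos (fun i _ => ha i) Finset.univ_nonempty
  have hB : 0 < ∑ i, b i := Finset.sum_pos (fun i _ => hb i) Finset.univ_nonempty
  set A := ∑ i, a i
  set B := ∑ i, b i
  have key := Real.strictConvexOn_mul_log.map_sum_eq_iff
    (w := fun i => b i / B) (p := fun i => a i / b i) (t := Finset.univ)
    (fun i _ => div_pos (hb i) hB)
    (by rw [← Finset.sum_div, div_self hB.ne'])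
    (fun i _ => le_of_lt (div_pos (ha i) (hb i)))
  have e1 : ∀ i : Fin n, (b i / B) * (a i / b i) = a i / B := fun i => by
    rw [mul_comm, div_mul_div_comm, mul_comm (a i), mul_div_mul_left _ _ (hb i).ne']
  have hsum : ∑ i, (b i / B) • (a i / b i) = A / B := by
    simp only [smul_eq_mul, e1, ← Finset.sum_div]
    rfl
  rw [hsum] at key
  have hsum2 : ∑ i, (b i / B) • ((a i / b i) * Real.log (a i / b i))
      = (∑ i, a i * Real.log (a i / b i)) / B := by
    have e2 : ∀ i : Fin n, (b i / B) * ((a i / b i) * Real.log (a i / b i))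
        = a i * Real.log (a i / b i) / B := fun i => by
      rw [← mul_assoc, e1 i, div_mul_eq_mul_div]
    simp only [smul_eq_mul, e2, ← Finset.sum_div]
  rw [hsum2] at key
  constructor
  · intro h
    refine ⟨A / B, fun i => ?_⟩
    have : A / B * Real.log (A / B) = (∑ i, a i * Real.log (a i / b i)) / B := by
      rw [h]; ring
    exact key.mp this i (Finset.mem_univ i)
  · intro ⟨c, hc⟩
    have hAB : A / B = c := by
      have : A = c * B := by
        simp only [A, B, Finset.mul_sum]
        exact Finset.sum_congr rfl fun i _ => by
          rw [← hc i, div_mul_cancel₀ _ (hb i).ne']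
      rw [this, mul_div_assoc, div_self hB.ne', mul_one]
    have h2 : A / B * Real.log (A / B) = (∑ i, a i * Real.log (a i / b i)) / B :=
      key.mpr (fun j _ => by show a j / b j = A / B; rw [hc j, hAB])
    have h3 : (∑ i, a i * Real.log (a i / b i)) / B = A / B * Real.log (A / B) := h2.symm
    field_simp at h3
    linarith [h3]
end

section
/- If a finite directed graph admits a conservative flow that is strictly positive on every edge, then the graph is weakly reversible: every edge lies on a directed cycle (equivalently, every connected component of the graph is strongly connected). -/
theorem stmt_5 {V : Type*} [Fintype V] [DecidableEq V]
    (E : Finset (V × V)) (f : V × V → ℝ)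
    (hpos : ∀ e ∈ E, 0 < f e)
    (hcons : ∀ v : V,
      ∑ e ∈ E.filter (fun e => e.2 = v), f e = ∑ e ∈ E.filter (fun e => e.1 = v), f e) :
    ∀ e ∈ E, Relation.ReflTransGen (fun u v => (u, v) ∈ E) e.2 e.1 := by
  classical
  rintro e he
  by_contra hnot
  set R := fun u v => (u, v) ∈ E with hR
  set S : Finset V := Finset.univ.filter (fun v => Relation.ReflTransGen R e.2 v) with hS
  have hmemS : ∀ v, v ∈ S ↔ Relation.ReflTransGen R e.2 v := by
    intro v; simp [hS]
  -- S is closed: if u ∈ S and (u,v) ∈ E then v ∈ S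
  have hclosed : ∀ e' ∈ E, e'.1 ∈ S → e'.2 ∈ S := by
    rintro ⟨u, v⟩ h1 h2
    rw [hmemS] at h2 ⊢
    exact h2.tail h1
  have key := Finset.sum_fiberwise_eq_sum_filter E S (fun e' => e'.2) f
  have key' := Finset.sum_fiberwise_eq_sum_filter E S (fun e' => e'.1) f
  have hsum : ∑ v ∈ S, ∑ e' ∈ E.filter (fun e' => e'.2 = v), f e'
      = ∑ v ∈ S, ∑ e' ∈ E.filter (fun e' => e'.1 = v), f e' :=
    Finset.sum_congr rfl fun v _ => hcons v
  rw [key, key'] at hsum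
  -- strict inequality
  have hsub : E.filter (fun e' => e'.1 ∈ S) ⊆ E.filter (fun e' => e'.2 ∈ S) := by
    intro e' h
    rw [Finset.mem_filter] at h ⊢
    exact ⟨h.1, hclosed e' h.1 h.2⟩
  have heIn : e ∈ E.filter (fun e' => e'.2 ∈ S) := by
    rw [Finset.mem_filter, hmemS]
    exact ⟨he, Relation.ReflTransGen.refl⟩
  have heOut : e ∉ E.filter (fun e' => e'.1 ∈ S) := by
    rw [Finset.mem_filter, hmemS]
    rintro ⟨-, h⟩
    exact hnot h
  have hlt : ∑ e' ∈ E.filter (fun e' => e'.1 ∈ S), f e'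
      < ∑ e' ∈ E.filter (fun e' => e'.2 ∈ S), f e' :=
    Finset.sum_lt_sum_of_subset hsub heIn heOut (hpos e he)
      (fun j hj _ => (hpos j (Finset.mem_filter.mp hj).1).le)
  exact absurd hsum (ne_of_gt hlt)
end

section
/- Every complex-balanced mass-action system is weakly reversible: if there exists α ∈ ℝ_{>0}^S such that for every complex y, ∑_{y'→y ∈ R} k_{y'→y} α^{y'} = ∑_{y→y'' ∈ R} k_{y→y''} α^{y}, then for every reaction y→y' ∈ R there is a directed path in the reaction graph from y' back to y. -/
theorem stmt_6 {S : Type*} [Fintype S] [DecidableEq S]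
    (R : Finset ((S → ℕ) × (S → ℕ)))
    (k : (S → ℕ) × (S → ℕ) → ℝ) (hk : ∀ r ∈ R, 0 < k r)
    (α : S → ℝ) (hα : ∀ i, 0 < α i)
    (hbal : ∀ y : S → ℕ,
      ∑ r ∈ R.filter (fun r => r.2 = y), k r * ∏ i, α i ^ r.1 i =
        ∑ r ∈ R.filter (fun r => r.1 = y), k r * ∏ i, α i ^ y i) :
    ∀ r ∈ R, Relation.ReflTransGen (fun y y' => (y, y') ∈ R) r.2 r.1 := by
  classical
  intro r0 hr0
  by_contra hpath
  set P : (S → ℕ) → Prop := fun v => Relation.ReflTransGen (fun y y' => (y, y') ∈ R) r0.2 v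
    with hP
  set flux : ((S → ℕ) × (S → ℕ)) → ℝ := fun r => k r * ∏ i, α i ^ r.1 i with hfluxdef
  have hflux : ∀ r ∈ R, 0 < flux r := fun r hr =>
    mul_pos (hk r hr) (Finset.prod_pos fun i _ => pow_pos (hα i) _)
  set V : Finset (S → ℕ) := R.image Prod.snd ∪ R.image Prod.fst with hV
  set A : Finset (S → ℕ) := V.filter P with hA
  -- balance summed over A, with RHS rewritten using r.1 = v
  have hsum : ∑ v ∈ A, ∑ r ∈ R.filter (fun r => r.2 = v), flux r
            = ∑ v ∈ A, ∑ r ∈ R.filter (fun r => r.1 = v), flux r := by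
    refine Finset.sum_congr rfl fun v _ => ?_
    have h := hbal v
    have h2 : ∑ r ∈ R.filter (fun r => r.1 = v), k r * ∏ i, α i ^ v i
        = ∑ r ∈ R.filter (fun r => r.1 = v), flux r := by
      refine Finset.sum_congr rfl fun r hr => ?_
      have h1 : r.1 = v := (Finset.mem_filter.mp hr).2
      simp only [hfluxdef, h1]
    rw [h2] at h
    exact h
  -- convert fiberwise sums to sums over edge sets
  have hfib : ∀ (g : ((S → ℕ) × (S → ℕ)) → (S → ℕ)),
      ∑ v ∈ A, ∑ r ∈ R.filter (fun r => g r = v), flux r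
        = ∑ r ∈ R.filter (fun r => g r ∈ A), flux r := by
    intro g
    rw [← Finset.sum_fiberwise_of_maps_to (g := g)
      (fun r hr => (Finset.mem_filter.mp hr).2)]
    refine Finset.sum_congr rfl fun v hv => ?_
    refine Finset.sum_congr ?_ fun _ _ => rfl
    rw [Finset.filter_filter]
    exact Finset.filter_congr fun r _ => ⟨fun h => ⟨h ▸ hv, h⟩, fun h => h.2⟩
  rw [hfib (fun r => r.2), hfib (fun r => r.1)] at hsum
  -- the source-set is a strict subset of the target-set
  have hsub : R.filter (fun r => r.1 ∈ A) ⊆ R.filter (fun r => r.2 ∈ A) := by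
    intro r hr
    obtain ⟨hrR, hr1⟩ := Finset.mem_filter.mp hr
    refine Finset.mem_filter.mpr ⟨hrR, Finset.mem_filter.mpr ⟨?_, ?_⟩⟩
    · exact Finset.mem_union_left _ (Finset.mem_image_of_mem _ hrR)
    · exact Relation.ReflTransGen.tail (Finset.mem_filter.mp hr1).2 hrR
  have hr0mem : r0 ∈ R.filter (fun r => r.2 ∈ A) := by
    refine Finset.mem_filter.mpr ⟨hr0, Finset.mem_filter.mpr ⟨?_, Relation.ReflTransGen.refl⟩⟩
    exact Finset.mem_union_left _ (Finset.mem_image_of_mem _ hr0)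
  have hr0not : r0 ∉ R.filter (fun r => r.1 ∈ A) := by
    intro h
    exact hpath (Finset.mem_filter.mp (Finset.mem_filter.mp h).2).2
  have hlt : ∑ r ∈ R.filter (fun r => r.1 ∈ A), flux r
      < ∑ r ∈ R.filter (fun r => r.2 ∈ A), flux r := by
    refine Finset.sum_lt_sum_of_subset hsub hr0mem hr0not (hflux r0 hr0) ?_
    intro j hj _
    exact (hflux j (Finset.mem_filter.mp hj).1).le
  exact absurd hsum (by linarith)
end

section
/- Flow decomposition: if f is a strictly positive conservative flow on a finite strongly connected directed graph G, then there exist simple directed cycles C_1,...,C_n in G and positive constants f^1,...,f^n such that for every edge e of G, f(e) = ∑_{i : e ∈ C_i} f^i. -/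
/-- The directed edges of the cycle through the vertices of `L` (in order,
wrapping around at the end). -/
def cycleEdges {V : Type*} (L : List V) : List (V × V) := L.zip (L.rotate 1)



lemma mem_cycleEdges {V : Type*} {L : List V} {e : V × V} (h : e ∈ cycleEdges L) :
    ∃ k : ℕ, ∃ hk : k < L.length,
      e = (L.get ⟨k, hk⟩, L.get ⟨(k+1) % L.length, Nat.mod_lt _ (by omega)⟩) := by
  unfold cycleEdges at h
  obtain ⟨i, hi⟩ := List.mem_iff_get.mp h
  have hlen : (L.zip (L.rotate 1)).length = L.length := by
    simp [List.length_zip, List.length_rotate]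
  have hk : (i : ℕ) < L.length := by omega
  refine ⟨i, hk, ?_⟩
  rw [List.get_eq_getElem, List.getElem_zip] at hi
  rw [← hi]
  congr 1
  simp [List.getElem_rotate]

lemma exists_cycle {V : Type*} [Fintype V] [DecidableEq V]
    (E : Finset (V × V)) (hne : E.Nonempty)
    (hstep : ∀ v : V, (∃ u, (u, v) ∈ E) → ∃ w, (v, w) ∈ E) :
    ∃ L : List V, L.Nodup ∧ L ≠ [] ∧ ∀ e ∈ cycleEdges L, e ∈ E := by
  classical
  obtain ⟨⟨a, b⟩, hab⟩ := hne
  -- build infinite walk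
  set T := {v : V // ∃ u, (u, v) ∈ E} with hT
  let g : T → T := fun p => ⟨(hstep p.1 p.2).choose, p.1, (hstep p.1 p.2).choose_spec⟩
  let x : ℕ → V := fun n => (g^[n] ⟨b, a, hab⟩).1
  have hedge : ∀ n, (x n, x (n+1)) ∈ E := by
    intro n
    have : x (n+1) = (g (g^[n] ⟨b, a, hab⟩)).1 := by
      simp only [x, Function.iterate_succ_apply']
    rw [this]
    exact (hstep (g^[n] ⟨b, a, hab⟩).1 (g^[n] ⟨b, a, hab⟩).2).choose_spec
  have hni : ∃ i j : ℕ, i ≠ j ∧ x i = x j := by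
    obtain ⟨i, j, hij, h⟩ := Finite.exists_ne_map_eq_of_infinite x
    exact ⟨i, j, hij, h⟩
  have hQ : ∃ j, ∃ i < j, x i = x j := by
    obtain ⟨i, j, hij, h⟩ := hni
    rcases lt_or_gt_of_ne hij with h' | h'
    · exact ⟨j, i, h', h⟩
    · exact ⟨i, j, h', h.symm⟩
  haveI := Classical.decPred (fun j => ∃ i < j, x i = x j)
  set j := Nat.find hQ with hj
  obtain ⟨i, hij, hxij⟩ := Nat.find_spec hQ
  have hdist : ∀ a b : ℕ, a < b → b < j → x a ≠ x b := by
    intro a b hab' hbj hx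
    exact Nat.find_min hQ hbj ⟨a, hab', hx⟩
  refine ⟨(List.range (j - i)).map (fun k => x (i + k)), ?_, ?_, ?_⟩
  · refine List.Nodup.map_on ?_ List.nodup_range
    intro k hk k' hk' hxx
    simp only [List.mem_range] at hk hk'
    by_contra hne'
    rcases lt_or_gt_of_ne hne' with h' | h'
    · exact hdist _ _ (by omega) (by omega) hxx
    · exact hdist _ _ (by omega) (by omega) hxx.symm
  · simp only [ne_eq, List.map_eq_nil_iff, List.range_eq_nil]
    omega
  · intro e he
    obtain ⟨k, hk, hke⟩ := mem_cycleEdges he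
    have hlen : ((List.range (j - i)).map (fun k => x (i + k))).length = j - i := by simp
    rw [hke]
    have hget : ∀ (m : ℕ) (hm : m < ((List.range (j - i)).map (fun k => x (i + k))).length),
        ((List.range (j - i)).map (fun k => x (i + k))).get ⟨m, hm⟩ = x (i + m) := by
      intro m hm
      simp
    rw [hget, hget]
    rw [hlen] at hk ⊢
    by_cases hk1 : k + 1 < j - i
    · rw [Nat.mod_eq_of_lt hk1]
      exact hedge (i + k)
    · have : k + 1 = j - i := by omega
      rw [this, Nat.mod_self]
      have h1 : i + k = j - 1 := by omega
      have := hedge (j - 1)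
      rw [h1]
      have h2 : j - 1 + 1 = j := by omega
      rw [h2] at this
      rw [← hxij] at this
      simpa using this



lemma cycleEdges_nodup {V : Type*} {L : List V} (h : L.Nodup) : (cycleEdges L).Nodup := by
  have hmap : (cycleEdges L).map Prod.fst = L :=
    List.map_fst_zip (by simp [List.length_rotate])
  exact List.Nodup.of_map Prod.fst (by rw [hmap]; exact h)

lemma map_fst_cycleEdges {V : Type*} (L : List V) : (cycleEdges L).map Prod.fst = L :=
  List.map_fst_zip (by simp [List.length_rotate])

lemma map_snd_cycleEdges {V : Type*} (L : List V) : (cycleEdges L).map Prod.snd = L.rotate 1 :=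
  List.map_snd_zip (by simp [List.length_rotate])

lemma countP_nodup {V : Type*} [DecidableEq V] {L : List V} (h : L.Nodup) (v : V) :
    L.countP (fun x => x = v) = if v ∈ L then 1 else 0 := by
  have : L.countP (fun x => x = v) = L.count v := by
    rw [List.count]
    apply List.countP_congr
    intro x _
    simp
  rw [this]
  split
  · exact List.count_eq_one_of_mem h ‹_›
  · exact List.count_eq_zero_of_not_mem ‹_›

lemma card_filter_cycle {V : Type*} [DecidableEq V] {L : List V} (h : L.Nodup) (v : V) :
    (((cycleEdges L).toFinset).filter (fun e => e.1 = v)).card = (if v ∈ L then 1 else 0) ∧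
    (((cycleEdges L).toFinset).filter (fun e => e.2 = v)).card = (if v ∈ L then 1 else 0) := by
  have hnd := cycleEdges_nodup h
  constructor
  · have h1 : (Finset.filter (fun e => e.1 = v) (cycleEdges L).toFinset)
        = ((cycleEdges L).filter (fun e => decide (e.1 = v))).toFinset := by
      rw [List.toFinset_filter]; simp
    rw [h1, List.toFinset_card_of_nodup (hnd.filter _), ← List.countP_eq_length_filter]
    have := List.countP_map (p := fun x => decide (x = v)) (f := Prod.fst (α := V) (β := V)) (l := cycleEdges L)
    rw [map_fst_cycleEdges] at this
    rw [show (fun (e : V × V) => decide (e.1 = v)) = ((fun x => decide (x = v)) ∘ Prod.fst) from rfl, ← this]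
    exact countP_nodup h v
  · have h1 : (Finset.filter (fun e => e.2 = v) (cycleEdges L).toFinset)
        = ((cycleEdges L).filter (fun e => decide (e.2 = v))).toFinset := by
      rw [List.toFinset_filter]; simp
    rw [h1, List.toFinset_card_of_nodup (hnd.filter _), ← List.countP_eq_length_filter]
    have := List.countP_map (p := fun x => decide (x = v)) (f := Prod.snd (α := V) (β := V)) (l := cycleEdges L)
    rw [map_snd_cycleEdges] at this
    rw [show (fun (e : V × V) => decide (e.2 = v)) = ((fun x => decide (x = v)) ∘ Prod.snd) from rfl, ← this]
    rw [countP_nodup (by rwa [List.nodup_rotate]) v]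
    simp [List.mem_rotate]

lemma decomp {V : Type*} [Fintype V] [DecidableEq V] :
    ∀ (N : ℕ) (E : Finset (V × V)) (f : V × V → ℝ), E.card ≤ N →
    (∀ e ∈ E, 0 < f e) →
    (∀ v : V,
      ∑ e ∈ E.filter (fun e => e.2 = v), f e = ∑ e ∈ E.filter (fun e => e.1 = v), f e) →
    ∃ (n : ℕ) (C : Fin n → List V) (w : Fin n → ℝ),
      (∀ i, (C i).Nodup ∧ C i ≠ [] ∧ ∀ e ∈ cycleEdges (C i), e ∈ E) ∧
      (∀ i, 0 < w i) ∧
      ∀ e ∈ E, f e = ∑ i ∈ Finset.univ.filter (fun i => e ∈ cycleEdges (C i)), w i := by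
  intro N
  induction N with
  | zero =>
    intro E f hcard _ _
    refine ⟨0, Fin.elim0, Fin.elim0, fun i => i.elim0, fun i => i.elim0, fun e he => ?_⟩
    have : E = ∅ := Finset.card_eq_zero.mp (Nat.le_zero.mp hcard)
    simp [this] at he
  | succ N ih =>
    intro E f hcard hpos hcons
    classical
    rcases eq_or_ne E ∅ with rfl | hEne
    · refine ⟨0, Fin.elim0, Fin.elim0, fun i => i.elim0, fun i => i.elim0, fun e he => ?_⟩
      simp at he
    have hne : E.Nonempty := Finset.nonempty_iff_ne_empty.mpr hEne
    -- step property
    have hstep : ∀ v : V, (∃ u, (u, v) ∈ E) → ∃ w, (v, w) ∈ E := by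
      intro v ⟨u, huv⟩
      have hin : 0 < ∑ e ∈ E.filter (fun e => e.2 = v), f e := by
        apply Finset.sum_pos
        · intro e he'
          exact hpos e (Finset.mem_filter.mp he').1
        · exact ⟨(u, v), Finset.mem_filter.mpr ⟨huv, rfl⟩⟩
      rw [hcons v] at hin
      obtain ⟨e, he⟩ := Finset.nonempty_of_sum_ne_zero hin.ne'
      obtain ⟨heE, he1⟩ := Finset.mem_filter.mp he
      exact ⟨e.2, by rwa [← he1, Prod.mk.eta]⟩
    obtain ⟨L, hLnd, hLne, hLE⟩ := exists_cycle E hne hstep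
    set S : Finset (V × V) := (cycleEdges L).toFinset with hSdef
    have hSE : S ⊆ E := fun e he => hLE e (List.mem_toFinset.mp he)
    have hSne : S.Nonempty := by
      rw [hSdef]
      have : cycleEdges L ≠ [] := by
        unfold cycleEdges
        simp only [ne_eq, List.zip_eq_nil_iff]; simp [hLne]
      exact (List.toFinset_nonempty_iff _).mpr this
    set m : ℝ := S.inf' hSne f with hmdef
    have hmle : ∀ e ∈ S, m ≤ f e := fun e he => Finset.inf'_le f he
    obtain ⟨e₀, he₀S, he₀m⟩ := Finset.exists_mem_eq_inf' hSne f
    have hmpos : 0 < m := by rw [hmdef, he₀m]; exact hpos e₀ (hSE he₀S)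
    set g : V × V → ℝ := fun e => f e - (if e ∈ S then m else 0) with hgdef
    set E' : Finset (V × V) := E.filter (fun e => g e ≠ 0) with hE'def
    have hE'E : E' ⊆ E := Finset.filter_subset _ _
    have hssub : E' ⊂ E := by
      refine Finset.ssubset_iff_of_subset hE'E |>.mpr ⟨e₀, hSE he₀S, ?_⟩
      simp only [hE'def, Finset.mem_filter, not_and, ne_eq, not_not]
      intro _
      simp only [hgdef, if_pos he₀S]
      rw [hmdef, he₀m, sub_self]
    have hcard' : E'.card ≤ N := by
      have := Finset.card_lt_card hssub
      omega
    have hgnonneg : ∀ e ∈ E, 0 ≤ g e := by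
      intro e he
      simp only [hgdef]
      split
      · linarith [hmle e ‹_›]
      · linarith [hpos e he]
    have hpos' : ∀ e ∈ E', 0 < g e := by
      intro e he
      obtain ⟨heE, hne0⟩ := Finset.mem_filter.mp he
      exact lt_of_le_of_ne (hgnonneg e heE) (Ne.symm hne0)
    -- conservation for g on E'
    have hgE : ∀ p : V × V → Prop, [inst : DecidablePred p] →
        ∑ e ∈ E'.filter p, g e = ∑ e ∈ E.filter p, g e := by
      intro p inst
      rw [hE'def, Finset.filter_comm]
      exact Finset.sum_filter_ne_zero _
    have hsplit : ∀ p : V × V → Prop, [inst : DecidablePred p] →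
        ∑ e ∈ E.filter p, g e
          = ∑ e ∈ E.filter p, f e - (S.filter p).card * m := by
      intro p inst
      rw [hgdef]
      rw [Finset.sum_sub_distrib]
      congr 1
      rw [Finset.sum_ite_mem]
      have : E.filter p ∩ S = S.filter p := by
        ext e
        simp only [Finset.mem_inter, Finset.mem_filter]
        constructor
        · rintro ⟨⟨_, hp⟩, hs⟩; exact ⟨hs, hp⟩
        · rintro ⟨hs, hp⟩; exact ⟨⟨hSE hs, hp⟩, hs⟩
      rw [this, Finset.sum_const, nsmul_eq_mul]
    have hcons' : ∀ v : V,
        ∑ e ∈ E'.filter (fun e => e.2 = v), g e = ∑ e ∈ E'.filter (fun e => e.1 = v), g e := by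
      intro v
      rw [hgE, hgE, hsplit, hsplit]
      obtain ⟨hc1, hc2⟩ := card_filter_cycle hLnd v
      rw [← hSdef] at hc1 hc2
      rw [hc1, hc2, hcons v]
    obtain ⟨n, C, w, hC, hw, hsum⟩ := ih E' g hcard' hpos' hcons'
    refine ⟨n + 1, Fin.cons L C, Fin.cons m w, ?_, ?_, ?_⟩
    · intro i
      refine Fin.cases ?_ ?_ i
      · exact ⟨hLnd, hLne, hLE⟩
      · intro j
        simp only [Fin.cons_succ]
        exact ⟨(hC j).1, (hC j).2.1, fun e he => hE'E ((hC j).2.2 e he)⟩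
    · intro i
      refine Fin.cases ?_ ?_ i
      · simpa using hmpos
      · intro j; simpa using hw j
    · intro e he
      rw [Finset.sum_filter, Fin.sum_univ_succ]
      simp only [Fin.cons_zero, Fin.cons_succ]
      have hfg : f e = g e + (if e ∈ cycleEdges L then m else 0) := by
        simp only [hgdef, hSdef, List.mem_toFinset]
        ring
      by_cases heE' : e ∈ E'
      · rw [hfg, hsum e heE', Finset.sum_filter]
        ring
      · have hg0 : g e = 0 := by
          by_contra h0
          exact heE' (Finset.mem_filter.mpr ⟨he, h0⟩)
        have hnotc : ∀ j : Fin n, e ∉ cycleEdges (C j) := by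
          intro j hj
          exact heE' ((hC j).2.2 e hj)
        rw [hfg, hg0]
        rw [Finset.sum_congr rfl (fun j _ => if_neg (hnotc j))]
        simp

theorem stmt_7 {V : Type*} [Fintype V] [DecidableEq V]
    (E : Finset (V × V)) (f : V × V → ℝ)
    (hpos : ∀ e ∈ E, 0 < f e)
    (hcons : ∀ v : V,
      ∑ e ∈ E.filter (fun e => e.2 = v), f e = ∑ e ∈ E.filter (fun e => e.1 = v), f e)
    (hstrong : ∀ u v : V, Relation.ReflTransGen (fun a b => (a, b) ∈ E) u v) :
    ∃ (n : ℕ) (C : Fin n → List V) (w : Fin n → ℝ),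
      (∀ i, (C i).Nodup ∧ C i ≠ [] ∧ ∀ e ∈ cycleEdges (C i), e ∈ E) ∧
      (∀ i, 0 < w i) ∧
      ∀ e ∈ E, f e = ∑ i ∈ Finset.univ.filter (fun i => e ∈ cycleEdges (C i)), w i := by
  exact decomp E.card E f le_rfl hpos hcons
end

section
/- Cycle Lyapunov lemma: suppose the reaction graph is a single directed m-cycle y_1 → y_2 → ... → y_m → y_1 (distinct complexes, m ≥ 2) with rates k_{y_j→y_{j+1}} > 0, and α ∈ ℝ_{>0}^S is such that the flow f_α(y_j→y_{j+1}) = k_{y_j→y_{j+1}} α^{y_j} is constant in j. Then for all x ∈ ℝ_{>0}^S, ⟨log(x/α), ∑_{j=1}^m k_{y_j→y_{j+1}} (y_{j+1} − y_j) x^{y_j}⟩ ≤ 0, with equality if and only if k_{y_j→y_{j+1}} x^{y_j} is constant in j. -/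
private lemma key_le (a b : ℝ) : Real.exp a * (b - a) ≤ Real.exp b - Real.exp a := by
  have h := Real.add_one_le_exp (b - a)
  have he : Real.exp b = Real.exp a * Real.exp (b - a) := by
    rw [← Real.exp_add]; ring_nf
  nlinarith [Real.exp_pos a]

private lemma key_eq (a b : ℝ) (h : Real.exp a * (b - a) = Real.exp b - Real.exp a) :
    b = a := by
  by_contra h'
  have hne : b - a ≠ 0 := sub_ne_zero.mpr h'
  have := Real.add_one_lt_exp hne
  have he : Real.exp b = Real.exp a * Real.exp (b - a) := by
    rw [← Real.exp_add]; ring_nf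
  nlinarith [Real.exp_pos a]

theorem stmt_12 {S : Type*} [Fintype S]
    (m : ℕ) [NeZero m] (hm : 2 ≤ m)
    (y : Fin m → (S → ℕ)) (hy : Function.Injective y)
    (k : Fin m → ℝ) (hk : ∀ j, 0 < k j)
    (α : S → ℝ) (hα : ∀ i, 0 < α i)
    (hconst : ∀ j j' : Fin m, k j * ∏ i, α i ^ y j i = k j' * ∏ i, α i ^ y j' i)
    (x : S → ℝ) (hx : ∀ i, 0 < x i) :
    (∑ i, Real.log (x i / α i) *
        (∑ j, k j * ((y (j + 1) i : ℝ) - (y j i : ℝ)) * ∏ s, x s ^ y j s)) ≤ 0 ∧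
    ((∑ i, Real.log (x i / α i) *
        (∑ j, k j * ((y (j + 1) i : ℝ) - (y j i : ℝ)) * ∏ s, x s ^ y j s)) = 0 ↔
      ∀ j j' : Fin m, k j * ∏ s, x s ^ y j s = k j' * ∏ s, x s ^ y j' s) := by
  set u : Fin m → ℝ := fun j => ∑ i, (y j i : ℝ) * Real.log (x i / α i) with hu
  set c : ℝ := k 0 * ∏ i, α i ^ y 0 i with hc
  have hcpos : 0 < c := by
    apply mul_pos (hk 0)
    exact Finset.prod_pos fun i _ => pow_pos (hα i) _
  -- key identity: k j * ∏ x^{y j} = c * exp (u j)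
  have hkey : ∀ j, k j * ∏ s, x s ^ y j s = c * Real.exp (u j) := by
    intro j
    have h1 : ∀ s, x s ^ y j s = α s ^ y j s * Real.exp ((y j s : ℝ) * Real.log (x s / α s)) := by
      intro s
      have hpos : 0 < x s / α s := div_pos (hx s) (hα s)
      rw [Real.exp_nat_mul, Real.exp_log hpos, div_pow]
      rw [mul_div_cancel₀ _ (pow_ne_zero _ (hα s).ne')]
    calc k j * ∏ s, x s ^ y j s
        = (k j * ∏ s, α s ^ y j s) * ∏ s, Real.exp ((y j s : ℝ) * Real.log (x s / α s)) := by
          rw [mul_assoc, ← Finset.prod_mul_distrib]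
          congr 1
          exact Finset.prod_congr rfl fun s _ => h1 s
      _ = c * Real.exp (u j) := by
          rw [hconst j 0, ← Real.exp_sum]
  -- rewrite the LHS as c * ∑ j, exp (u j) * (u (j+1) - u j)
  have hLHS : (∑ i, Real.log (x i / α i) *
        (∑ j, k j * ((y (j + 1) i : ℝ) - (y j i : ℝ)) * ∏ s, x s ^ y j s))
      = c * ∑ j, Real.exp (u j) * (u (j + 1) - u j) := by
    simp only [Finset.mul_sum]
    rw [Finset.sum_comm]
    refine Finset.sum_congr rfl fun j _ => ?_
    have h2 : ∑ i, Real.log (x i / α i) * (k j * ((y (j + 1) i : ℝ) - (y j i : ℝ)) * ∏ s, x s ^ y j s)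
        = (k j * ∏ s, x s ^ y j s) * (u (j + 1) - u j) := by
      simp only [hu, ← Finset.sum_sub_distrib, Finset.mul_sum]
      refine Finset.sum_congr rfl fun i _ => ?_
      ring
    rw [h2, hkey j]
    ring
  -- telescoping sum
  have htel : ∑ j, (Real.exp (u (j + 1)) - Real.exp (u j)) = 0 := by
    rw [Finset.sum_sub_distrib]
    have : ∑ j : Fin m, Real.exp (u (j + 1)) = ∑ j : Fin m, Real.exp (u j) :=
      Fintype.sum_equiv (Equiv.addRight (1 : Fin m)) _ _ (fun j => rfl)
    rw [this, sub_self]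
  have hterm_le : ∀ j : Fin m,
      Real.exp (u j) * (u (j + 1) - u j) - (Real.exp (u (j + 1)) - Real.exp (u j)) ≤ 0 :=
    fun j => sub_nonpos.mpr (key_le _ _)
  have hsum_eq : ∑ j, Real.exp (u j) * (u (j + 1) - u j)
      = ∑ j, (Real.exp (u j) * (u (j + 1) - u j) - (Real.exp (u (j + 1)) - Real.exp (u j))) := by
    rw [Finset.sum_sub_distrib, htel, sub_zero]
  have hsum_le : ∑ j, Real.exp (u j) * (u (j + 1) - u j) ≤ 0 := by
    rw [hsum_eq]
    exact Finset.sum_nonpos fun j _ => hterm_le j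
  constructor
  · rw [hLHS]
    exact mul_nonpos_of_nonneg_of_nonpos hcpos.le hsum_le
  · rw [hLHS]
    constructor
    · intro h0
      have hsum0 : ∑ j, Real.exp (u j) * (u (j + 1) - u j) = 0 := by
        rcases mul_eq_zero.mp h0 with h | h
        · exact absurd h hcpos.ne'
        · exact h
      rw [hsum_eq] at hsum0
      have hall : ∀ j ∈ Finset.univ,
          Real.exp (u j) * (u (j + 1) - u j) - (Real.exp (u (j + 1)) - Real.exp (u j)) = 0 :=
        (Finset.sum_eq_zero_iff_of_nonpos fun j _ => hterm_le j).mp hsum0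
      have hstep : ∀ j : Fin m, u (j + 1) = u j := by
        intro j
        exact key_eq _ _ (sub_eq_zero.mp (hall j (Finset.mem_univ j)))
      have huconst : ∀ j : Fin m, u j = u 0 := by
        intro j
        open Fin.NatCast in
        have : ∀ n : ℕ, u ((n : Fin m)) = u 0 := by
          intro n
          induction n with
          | zero => simp
          | succ n ih =>
            have : ((n + 1 : ℕ) : Fin m) = ((n : ℕ) : Fin m) + 1 := by push_cast; ring
            rw [this, hstep, ih]
        open Fin.NatCast in
        have hj : ((j : ℕ) : Fin m) = j := Fin.cast_val_eq_self j
        rw [← hj, this]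
      intro j j'
      rw [hkey j, hkey j', huconst j, huconst j']
    · intro hc'
      have huconst : ∀ j : Fin m, u j = u 0 := by
        intro j
        have := hc' j 0
        rw [hkey j, hkey 0] at this
        have := mul_left_cancel₀ hcpos.ne' this
        exact Real.exp_injective this
      have : ∀ j : Fin m, Real.exp (u j) * (u (j + 1) - u j) = 0 := by
        intro j
        rw [huconst j, huconst (j + 1)]
        ring
      rw [Finset.sum_congr rfl fun j _ => this j, Finset.sum_const, smul_zero, mul_zero]
end

section
/- For an m-cycle reaction network with constant complex-balanced flow f_α, the derivative expression factors as ⟨log(x/α), ∑_{j=1}^m k_{y_j→y_{j+1}}(y_{j+1}−y_j) x^{y_j}⟩ = f_α · ∑_{j=1}^m M_j(x) log(M_{j+1}(x)/M_j(x)), where M_j(x) = (x/α)^{y_j}. -/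
theorem stmt_13 {S : Type*} [Fintype S]
    (m : ℕ) [NeZero m]
    (y : Fin m → (S → ℕ))
    (k : Fin m → ℝ) (hk : ∀ j, 0 < k j)
    (α : S → ℝ) (hα : ∀ i, 0 < α i)
    (fα : ℝ) (hfα : ∀ j, k j * ∏ i, α i ^ y j i = fα)
    (x : S → ℝ) (hx : ∀ i, 0 < x i)
    (M : Fin m → ℝ) (hM : ∀ j, M j = ∏ i, (x i / α i) ^ y j i) :
    (∑ i, Real.log (x i / α i) *
        (∑ j, k j * ((y (j + 1) i : ℝ) - (y j i : ℝ)) * ∏ s, x s ^ y j s)) =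
      fα * ∑ j, M j * Real.log (M (j + 1) / M j) := by
  have hMpos : ∀ j, 0 < M j := by
    intro j; rw [hM]
    exact Finset.prod_pos fun i _ => pow_pos (div_pos (hx i) (hα i)) _
  have hlogM : ∀ j, Real.log (M j) = ∑ i, (y j i : ℝ) * Real.log (x i / α i) := by
    intro j
    rw [hM, Real.log_prod (fun i _ => (pow_pos (div_pos (hx i) (hα i)) _).ne')]
    simp [Real.log_pow]
  have hkey : ∀ j, k j * ∏ s, x s ^ y j s = fα * M j := by
    intro j
    have h : ∏ s, x s ^ y j s = (∏ s, α s ^ y j s) * ∏ s, (x s / α s) ^ y j s := by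
      rw [← Finset.prod_mul_distrib]
      refine Finset.prod_congr rfl fun s _ => ?_
      rw [← mul_pow, mul_div_cancel₀ _ (hα s).ne']
    rw [h, hM, ← mul_assoc, hfα j]
  simp_rw [Finset.mul_sum]
  rw [Finset.sum_comm]
  refine Finset.sum_congr rfl fun j _ => ?_
  rw [Real.log_div (hMpos _).ne' (hMpos _).ne']
  have expand : ∑ i, Real.log (x i / α i) * (k j * ((y (j+1) i:ℝ) - (y j i:ℝ)) * ∏ s, x s ^ y j s)
      = (k j * ∏ s, x s ^ y j s) *
        ((∑ i, (y (j+1) i:ℝ) * Real.log (x i/α i)) - ∑ i, (y j i:ℝ) * Real.log (x i/α i)) := by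
    rw [← Finset.sum_sub_distrib, Finset.mul_sum]
    refine Finset.sum_congr rfl fun i _ => ?_
    ring
  rw [expand, hkey j, hlogM, hlogM]
  ring
end

section
/- Horn–Jackson theorem: let (S,R,k) be a complex-balanced mass-action system with point of complex balance α ∈ ℝ_{>0}^S. If x : [0,∞) → ℝ_{>0}^S solves the mass-action ODE x'(t) = ∑_{y→y' ∈ R} k_{y→y'} (y'−y) x(t)^y, then d/dt g_α(x(t)) ≤ 0 for all t ≥ 0, where g_α(x) = ∑_i (x_i log x_i − x_i − x_i log α_i); moreover equality holds at time t if and only if x(t) is itself a point of complex balance. -/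
private lemma sum_regroup {ι κ : Type*} [DecidableEq κ] (R : Finset ι)
    (a b : ι → κ) (w v : ι → ℝ) (G : κ → ℝ)
    (h : ∀ y, ∑ r ∈ R.filter (fun r => a r = y), w r =
        ∑ r ∈ R.filter (fun r => b r = y), v r) :
    ∑ r ∈ R, w r * G (a r) = ∑ r ∈ R, v r * G (b r) := by
  classical
  set t : Finset κ := R.image a ∪ R.image b with ht
  have ha : ∀ r ∈ R, a r ∈ t := fun r hr =>
    Finset.mem_union_left _ (Finset.mem_image_of_mem a hr)
  have hb : ∀ r ∈ R, b r ∈ t := fun r hr =>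
    Finset.mem_union_right _ (Finset.mem_image_of_mem b hr)
  rw [← Finset.sum_fiberwise_of_maps_to ha (fun r => w r * G (a r)),
      ← Finset.sum_fiberwise_of_maps_to hb (fun r => v r * G (b r))]
  refine Finset.sum_congr rfl fun y _ => ?_
  have h1 : ∑ r ∈ R.filter (fun r => a r = y), w r * G (a r) =
      (∑ r ∈ R.filter (fun r => a r = y), w r) * G y := by
    rw [Finset.sum_mul]
    refine Finset.sum_congr rfl fun r hr => ?_
    rw [(Finset.mem_filter.mp hr).2]
  have h2 : ∑ r ∈ R.filter (fun r => b r = y), v r * G (b r) =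
      (∑ r ∈ R.filter (fun r => b r = y), v r) * G y := by
    rw [Finset.sum_mul]
    refine Finset.sum_congr rfl fun r hr => ?_
    rw [(Finset.mem_filter.mp hr).2]
  rw [h1, h2, h y]

theorem stmt_15 {S : Type*} [Fintype S] [DecidableEq S]
    (R : Finset ((S → ℕ) × (S → ℕ)))
    (k : (S → ℕ) × (S → ℕ) → ℝ) (hk : ∀ r ∈ R, 0 < k r)
    (α : S → ℝ) (hα : ∀ i, 0 < α i)
    (hbal : ∀ y : S → ℕ,
      ∑ r ∈ R.filter (fun r => r.2 = y), k r * ∏ i, α i ^ r.1 i =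
        ∑ r ∈ R.filter (fun r => r.1 = y), k r * ∏ i, α i ^ y i)
    (x : ℝ → (S → ℝ)) (hxpos : ∀ t ≥ (0 : ℝ), ∀ i, 0 < x t i)
    (hode : ∀ t ≥ (0 : ℝ), ∀ i : S, HasDerivAt (fun τ => x τ i)
      (∑ r ∈ R, k r * ((r.2 i : ℝ) - (r.1 i : ℝ)) * ∏ s, x t s ^ r.1 s) t) :
    ∀ t ≥ (0 : ℝ), ∃ d : ℝ,
      HasDerivAt (fun τ => ∑ i, (x τ i * Real.log (x τ i) - x τ i -
        x τ i * Real.log (α i))) d t ∧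
      d ≤ 0 ∧
      (d = 0 ↔ ∀ y : S → ℕ,
        ∑ r ∈ R.filter (fun r => r.2 = y), k r * ∏ i, x t i ^ r.1 i =
          ∑ r ∈ R.filter (fun r => r.1 = y), k r * ∏ i, x t i ^ y i) := by
  intro t ht
  -- abbreviations
  set P : (S → ℕ) → ℝ := fun y => ∏ i, x t i ^ y i with hP
  set Q : (S → ℕ) → ℝ := fun y => ∏ i, α i ^ y i with hQ
  set L : (S → ℕ) → ℝ :=
    fun y => ∑ i, (y i : ℝ) * (Real.log (x t i) - Real.log (α i)) with hL
  have hQpos : ∀ y, 0 < Q y := fun y => Finset.prod_pos fun i _ => pow_pos (hα i) _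
  have hkey : ∀ y, P y = Q y * Real.exp (L y) := by
    intro y
    have h1 : Real.exp (L y) = ∏ i, (x t i / α i) ^ y i := by
      rw [hL]
      rw [Real.exp_sum]
      refine Finset.prod_congr rfl fun i _ => ?_
      rw [Real.exp_nat_mul, Real.exp_sub, Real.exp_log (hxpos t ht i), Real.exp_log (hα i)]
    rw [h1, hP, hQ, ← Finset.prod_mul_distrib]
    refine Finset.prod_congr rfl fun i _ => ?_
    rw [div_pow, mul_div_assoc', mul_div_cancel_left₀ _ (pow_ne_zero _ (hα i).ne')]
  -- the derivative
  have hD : HasDerivAt (fun τ => ∑ i, (x τ i * Real.log (x τ i) - x τ i -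
      x τ i * Real.log (α i)))
      (∑ i, (Real.log (x t i) - Real.log (α i)) *
        (∑ r ∈ R, k r * ((r.2 i : ℝ) - (r.1 i : ℝ)) * ∏ s, x t s ^ r.1 s)) t := by
    refine HasDerivAt.fun_sum fun i _ => ?_
    have hxi := hxpos t ht i
    have h1 : HasDerivAt (fun u : ℝ => u * Real.log u - u - u * Real.log (α i))
        (Real.log (x t i) - Real.log (α i)) (x t i) := by
      have h2 := (((hasDerivAt_id (x t i)).mul (Real.hasDerivAt_log hxi.ne')).sub
        (hasDerivAt_id (x t i))).sub ((hasDerivAt_id (x t i)).mul_const (Real.log (α i)))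
      refine h2.congr_deriv ?_
      simp only [id_eq]
      rw [mul_inv_cancel₀ hxi.ne']
      ring
    exact h1.comp t (hode t ht i)
  refine ⟨∑ i, (Real.log (x t i) - Real.log (α i)) *
        (∑ r ∈ R, k r * ((r.2 i : ℝ) - (r.1 i : ℝ)) * ∏ s, x t s ^ r.1 s), hD, ?_⟩
  -- rewrite d reaction-wise
  have hd1 : (∑ i, (Real.log (x t i) - Real.log (α i)) *
        (∑ r ∈ R, k r * ((r.2 i : ℝ) - (r.1 i : ℝ)) * ∏ s, x t s ^ r.1 s))
      = ∑ r ∈ R, k r * P r.1 * (L r.2 - L r.1) := by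
    simp only [Finset.mul_sum]
    rw [Finset.sum_comm]
    refine Finset.sum_congr rfl fun r hr => ?_
    have h3 : L r.2 - L r.1 =
        ∑ i, ((r.2 i : ℝ) - (r.1 i : ℝ)) * (Real.log (x t i) - Real.log (α i)) := by
      rw [hL, ← Finset.sum_sub_distrib]
      exact Finset.sum_congr rfl fun i _ => by ring
    rw [h3, Finset.mul_sum, hP]
    exact Finset.sum_congr rfl fun i _ => by ring
  -- key per-reaction identity
  have hsub : ∀ r ∈ R, k r * P r.1 * (L r.2 - L r.1)
      - k r * Q r.1 * (Real.exp (L r.2) - Real.exp (L r.1))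
      = -(k r * Q r.1 * Real.exp (L r.1)) *
          (Real.exp (L r.2 - L r.1) - 1 - (L r.2 - L r.1)) := by
    intro r hr
    rw [hkey r.1, Real.exp_sub]
    have he : Real.exp (L r.1) ≠ 0 := (Real.exp_pos _).ne'
    field_simp
    ring
  have hE : ∀ c : ℝ, 0 ≤ Real.exp c - 1 - c := fun c => by
    have := Real.add_one_le_exp c; linarith
  have hEeq : ∀ c : ℝ, Real.exp c - 1 - c = 0 ↔ c = 0 := by
    intro c
    constructor
    · intro h
      by_contra hc
      have := Real.add_one_lt_exp hc
      linarith
    · intro h; simp [h]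
  have hpos : ∀ r ∈ R, 0 < k r * Q r.1 * Real.exp (L r.1) := fun r hr =>
    mul_pos (mul_pos (hk r hr) (hQpos r.1)) (Real.exp_pos _)
  -- the α-balance sum vanishes
  have hBzero : ∑ r ∈ R, k r * Q r.1 * (Real.exp (L r.2) - Real.exp (L r.1)) = 0 := by
    have hreg := sum_regroup R Prod.snd Prod.fst (fun r => k r * Q r.1)
      (fun r => k r * Q r.1) (fun y => Real.exp (L y)) ?_
    · simp only [mul_sub]
      rw [Finset.sum_sub_distrib]
      rw [show (∑ r ∈ R, k r * Q r.1 * Real.exp (L r.2)) =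
          ∑ r ∈ R, k r * Q r.1 * Real.exp (L r.1) from hreg]
      exact sub_self _
    · intro y
      have hb := hbal y
      have h4 : ∑ r ∈ R.filter (fun r => r.1 = y), k r * ∏ i, α i ^ y i
          = ∑ r ∈ R.filter (fun r => r.1 = y), k r * Q r.1 := by
        refine Finset.sum_congr rfl fun r hr => ?_
        rw [hQ, (Finset.mem_filter.mp hr).2]
      rw [hQ]
      rw [← h4]
      exact hb
  have hAB : ∀ r ∈ R, k r * P r.1 * (L r.2 - L r.1)
      - k r * Q r.1 * (Real.exp (L r.2) - Real.exp (L r.1)) ≤ 0 := by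
    intro r hr
    rw [hsub r hr, neg_mul]
    exact neg_nonpos.mpr (mul_nonneg (hpos r hr).le (hE _))
  have hdle : (∑ r ∈ R, k r * P r.1 * (L r.2 - L r.1)) ≤ 0 := by
    have h5 : (∑ r ∈ R, k r * P r.1 * (L r.2 - L r.1)) =
        ∑ r ∈ R, (k r * P r.1 * (L r.2 - L r.1)
          - k r * Q r.1 * (Real.exp (L r.2) - Real.exp (L r.1))) := by
      rw [Finset.sum_sub_distrib, hBzero, sub_zero]
    rw [h5]
    exact Finset.sum_nonpos hAB
  constructor
  · rw [hd1]; exact hdle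
  -- equality case
  have hiff : (∑ r ∈ R, k r * P r.1 * (L r.2 - L r.1)) = 0 ↔
      ∀ r ∈ R, L r.2 = L r.1 := by
    rw [show (∑ r ∈ R, k r * P r.1 * (L r.2 - L r.1)) =
        ∑ r ∈ R, (k r * P r.1 * (L r.2 - L r.1)
          - k r * Q r.1 * (Real.exp (L r.2) - Real.exp (L r.1))) from by
      rw [Finset.sum_sub_distrib, hBzero, sub_zero]]
    rw [Finset.sum_eq_zero_iff_of_nonpos hAB]
    constructor
    · intro h r hr
      have h6 := h r hr
      rw [hsub r hr, neg_mul, neg_eq_zero, mul_eq_zero] at h6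
      rcases h6 with h6 | h6
      · exact absurd h6 (hpos r hr).ne'
      · have := (hEeq _).mp h6
        linarith [sub_eq_zero.mp this]
    · intro h r hr
      rw [hsub r hr, h r hr]
      simp
  rw [hd1]
  constructor
  · -- d = 0 implies x is complex balanced
    intro hd0
    have hLeq := hiff.mp hd0
    intro y
    have hleft : ∑ r ∈ R.filter (fun r => r.2 = y), k r * ∏ i, x t i ^ r.1 i
        = (∑ r ∈ R.filter (fun r => r.2 = y), k r * Q r.1) * Real.exp (L y) := by
      rw [Finset.sum_mul]
      refine Finset.sum_congr rfl fun r hr => ?_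
      have hm := Finset.mem_filter.mp hr
      have hPr : (∏ i, x t i ^ r.1 i) = P r.1 := by rw [hP]
      rw [hPr, hkey r.1, ← hLeq r hm.1, hm.2]
      ring
    have hright : ∑ r ∈ R.filter (fun r => r.1 = y), k r * ∏ i, x t i ^ y i
        = (∑ r ∈ R.filter (fun r => r.1 = y), k r * ∏ i, α i ^ y i) * Real.exp (L y) := by
      rw [Finset.sum_mul]
      refine Finset.sum_congr rfl fun r hr => ?_
      have hPy : (∏ i, x t i ^ y i) = P y := by rw [hP]
      rw [hPy, hkey y, hQ]
      ring
    rw [hleft, hright]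
    congr 1
    rw [← hbal y]
  · -- x complex balanced implies d = 0
    intro hbx
    have hreg := sum_regroup R Prod.snd Prod.fst (fun r => k r * P r.1)
      (fun r => k r * P r.1) L ?_
    · have h7 : ∑ r ∈ R, k r * P r.1 * (L r.2 - L r.1) =
          (∑ r ∈ R, k r * P r.1 * L r.2) - ∑ r ∈ R, k r * P r.1 * L r.1 := by
        rw [← Finset.sum_sub_distrib]
        exact Finset.sum_congr rfl fun r _ => by ring
      rw [h7, show (∑ r ∈ R, k r * P r.1 * L r.2) =
          ∑ r ∈ R, k r * P r.1 * L r.1 from hreg, sub_self]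
    · intro y
      simp only [hP]
      rw [hbx y]
      refine Finset.sum_congr rfl fun r hr => ?_
      rw [(Finset.mem_filter.mp hr).2]
end
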